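/- Abstract martingale gap theorem: Let H = Σ_{i=0}^{N} h_i be a sum of nonnegative self-adjoint operators on a finite-dimensional Hilbert space, each with spectral gap at least γ > 0 above its kernel. Let G_Λ denote orthogonal projections onto intersections of kernels as in the martingale setup, and define E₀ = 1 - G_{Λ₀}, E_i = G_{Λ_i} - G_{Λ_{i+1}} for 1 ≤ i < N, E_N = G_{[1,b]}, which are mutually orthogonal projections summing to the identity. Assume ‖G_{C_{i+1}} E_i‖ ≤ ε with 0 ≤ ε < 1/√2 for all 0 ≤ i ≤ N-1, and that E_m commutes with G_{C_n} for m ≤ n-2 and m ≥ n+1. Then for every vector ψ orthogonal to ker H, one has ⟨ψ, Hψ⟩ ≥ γ(1 - √2 ε)² ‖ψ‖². -/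

import Mathlib

open scoped InnerProductSpace

set_option maxHeartbeats 1000000 in
/-- Abstract martingale-method gap theorem (Nachtergaele): if `H = Σ_{i=0}^N h_i` is a sum
of nonnegative symmetric operators, each satisfying `h_i ≥ γ(1 - G_i)` with `G_i` the
orthogonal projection onto `ker h_i`, if the symmetric projections `E_0,…,E_N` are mutually
orthogonal, sum to the identity, `E_N` is the orthogonal projection onto `ker H`,
`E_m` commutes with `G_n` whenever `m ≤ n-2` or `m ≥ n+1`, and
`E_i G_{i+1} E_i ≤ ε² E_i` for `0 ≤ i ≤ N-1` with `0 ≤ ε < 1/√2`, then for every `ψ`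
orthogonal to `ker H` one has `⟨ψ, Hψ⟩ ≥ γ(1-√2 ε)² ‖ψ‖²`. -/
theorem stmt10
    {H : Type*} [NormedAddCommGroup H] [InnerProductSpace ℂ H] [FiniteDimensional ℂ H]
    (N : ℕ) (h G E : ℕ → (H →ₗ[ℂ] H)) (γ ε : ℝ)
    (hγ : 0 < γ) (hε0 : 0 ≤ ε) (hε : ε < 1 / Real.sqrt 2)
    -- each `h i` is symmetric and nonnegative
    (hsym : ∀ i ≤ N, LinearMap.IsSymmetric (h i))
    (hpos : ∀ i ≤ N, ∀ φ : H, 0 ≤ (⟪φ, h i φ⟫_ℂ).re)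
    -- `G i` is the orthogonal projection onto `ker (h i)`
    (hGsym : ∀ i ≤ N, LinearMap.IsSymmetric (G i))
    (hGproj : ∀ i ≤ N, G i ∘ₗ G i = G i)
    (hGker : ∀ i ≤ N, ∀ φ : H, h i φ = 0 ↔ G i φ = φ)
    -- the martingale projections `E i`: symmetric, mutually orthogonal, resolution of identity
    (hEsym : ∀ i ≤ N, LinearMap.IsSymmetric (E i))
    (hEorth : ∀ i ≤ N, ∀ j ≤ N, E i ∘ₗ E j = if i = j then E i else 0)
    (hEsum : ∑ i ∈ Finset.range (N + 1), E i = LinearMap.id)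
    -- `E N` is the orthogonal projection onto `ker H`
    (hEN : ∀ φ : H, (∑ i ∈ Finset.range (N + 1), h i) φ = 0 ↔ E N φ = φ)
    -- gap of the local Hamiltonians:  h_i ≥ γ (1 - G_i)
    (hgap : ∀ i ≤ N, ∀ φ : H, γ * (‖φ‖^2 - (⟪φ, G i φ⟫_ℂ).re) ≤ (⟪φ, h i φ⟫_ℂ).re)
    -- commutation: E_m commutes with G_n for m ≤ n-2 or m ≥ n+1
    (hcomm : ∀ m ≤ N, ∀ n ≤ N, (m + 2 ≤ n ∨ n + 1 ≤ m) → E m ∘ₗ G n = G n ∘ₗ E m)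
    -- key estimate: E_i G_{i+1} E_i ≤ ε² E_i for 0 ≤ i ≤ N-1
    (hkey : ∀ i < N, ∀ φ : H, (⟪E i φ, G (i+1) (E i φ)⟫_ℂ).re ≤ ε^2 * (⟪φ, E i φ⟫_ℂ).re)
    -- ψ orthogonal to ker H
    (ψ : H) (hψ : ∀ φ : H, (∑ i ∈ Finset.range (N + 1), h i) φ = 0 → ⟪φ, ψ⟫_ℂ = 0) :
    γ * (1 - Real.sqrt 2 * ε)^2 * ‖ψ‖^2 ≤
      (⟪ψ, (∑ i ∈ Finset.range (N + 1), h i) ψ⟫_ℂ).re := by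
  classical
  -- notation
  set a : ℕ → ℝ := fun m => ‖E m ψ‖ with ha_def
  set c : ℕ → ℝ := fun n => ‖ψ - G n ψ‖ with hc_def
  have ha_nonneg : ∀ m, 0 ≤ a m := fun m => norm_nonneg _
  have hc_nonneg : ∀ n, 0 ≤ c n := fun n => norm_nonneg _
  have hinner_self : ∀ x : H, (⟪x, x⟫_ℂ).re = ‖x‖ ^ 2 := fun x =>
    inner_self_eq_norm_sq (𝕜 := ℂ) x
  have hre_le : ∀ x y : H, (⟪x, y⟫_ℂ).re ≤ ‖x‖ * ‖y‖ := fun x y =>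
    re_inner_le_norm (𝕜 := ℂ) x y
  have hnorm_add : ∀ x y : H, ‖x + y‖ ^ 2 = ‖x‖ ^ 2 + 2 * (⟪x, y⟫_ℂ).re + ‖y‖ ^ 2 := fun x y =>
    norm_add_sq (𝕜 := ℂ) x y
  have hnorm_sub : ∀ x y : H, ‖x - y‖ ^ 2 = ‖x‖ ^ 2 - 2 * (⟪x, y⟫_ℂ).re + ‖y‖ ^ 2 := fun x y =>
    norm_sub_sq (𝕜 := ℂ) x y
  -- ψ is the sum of its components
  have hψsum : ψ = ∑ m ∈ Finset.range (N + 1), E m ψ := by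
    conv_lhs => rw [show ψ = LinearMap.id (R := ℂ) ψ from rfl, ← hEsum]
    rw [LinearMap.sum_apply]
  -- idempotence of E m
  have hEidem : ∀ m ≤ N, E m (E m ψ) = E m ψ := by
    intro m hm
    have := hEorth m hm m hm
    rw [if_pos rfl] at this
    simpa using DFunLike.congr_fun this ψ
  -- a m ^ 2 = re ⟪ψ, E m ψ⟫
  have hasq : ∀ m ≤ N, (⟪ψ, E m ψ⟫_ℂ).re = a m ^ 2 := by
    intro m hm
    have h1 : ⟪E m ψ, E m ψ⟫_ℂ = ⟪ψ, E m ψ⟫_ℂ := by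
      rw [hEsym m hm ψ (E m ψ), hEidem m hm]
    have h2 : (⟪E m ψ, E m ψ⟫_ℂ).re = a m ^ 2 := hinner_self (E m ψ)
    rw [← h1, h2]
  -- E N ψ = 0
  have hENψ : E N ψ = 0 := by
    have h2 : (∑ i ∈ Finset.range (N + 1), h i) (E N ψ) = 0 :=
      (hEN (E N ψ)).mpr (hEidem N le_rfl)
    have h3 : ⟪E N ψ, ψ⟫_ℂ = 0 := hψ _ h2
    have h4 : ⟪E N ψ, E N ψ⟫_ℂ = 0 := by
      calc ⟪E N ψ, E N ψ⟫_ℂ = ⟪ψ, E N (E N ψ)⟫_ℂ := hEsym N le_rfl ψ (E N ψ)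
        _ = ⟪ψ, E N ψ⟫_ℂ := by rw [hEidem N le_rfl]
        _ = starRingEnd ℂ ⟪E N ψ, ψ⟫_ℂ := (inner_conj_symm _ _).symm
        _ = 0 := by rw [h3]; simp
    exact inner_self_eq_zero.mp h4
  have haN : a N = 0 := by simp [ha_def, hENψ]
  -- orthogonality of components
  have horth : ∀ i ≤ N, ∀ j ≤ N, i ≠ j → ⟪E i ψ, E j ψ⟫_ℂ = 0 := by
    intro i hi j hj hij
    have h1 : ⟪E i ψ, E j ψ⟫_ℂ = ⟪ψ, E i (E j ψ)⟫_ℂ := hEsym i hi ψ (E j ψ)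
    have h2 : E i (E j ψ) = 0 := by
      have := hEorth i hi j hj
      rw [if_neg hij] at this
      simpa using DFunLike.congr_fun this ψ
    rw [h1, h2, inner_zero_right]
  -- norm decomposition
  have hA2 : ‖ψ‖ ^ 2 = ∑ m ∈ Finset.range (N + 1), a m ^ 2 := by
    have h1 : (⟪ψ, ψ⟫_ℂ).re = ‖ψ‖ ^ 2 := hinner_self ψ
    have h2 : ⟪ψ, ψ⟫_ℂ = ∑ m ∈ Finset.range (N + 1), ⟪ψ, E m ψ⟫_ℂ := by
      conv_lhs => rw [show (⟪ψ, ψ⟫_ℂ = ⟪ψ, ∑ m ∈ Finset.range (N+1), E m ψ⟫_ℂ) by rw [← hψsum]]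
      exact inner_sum _ _ _
    rw [← h1, h2, Complex.re_sum]
    exact Finset.sum_congr rfl fun m hm => hasq m (Nat.lt_succ_iff.mp (Finset.mem_range.mp hm))
  have hA2' : ‖ψ‖ ^ 2 = ∑ i ∈ Finset.range N, a i ^ 2 := by
    rw [hA2, Finset.sum_range_succ, haN]; ring
  -- c n ^ 2 = ‖ψ‖^2 - re ⟪ψ, G n ψ⟫
  have hcsq : ∀ n ≤ N, c n ^ 2 = ‖ψ‖ ^ 2 - (⟪ψ, G n ψ⟫_ℂ).re := by
    intro n hn
    have h1 : c n ^ 2 = ‖ψ‖ ^ 2 - 2 * (⟪ψ, G n ψ⟫_ℂ).re + ‖G n ψ‖ ^ 2 := by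
      simpa [hc_def] using hnorm_sub ψ (G n ψ)
    have h2 : ‖G n ψ‖ ^ 2 = (⟪ψ, G n ψ⟫_ℂ).re := by
      have hGidem : G n (G n ψ) = G n ψ := by
        simpa using DFunLike.congr_fun (hGproj n hn) ψ
      have h3 : ⟪G n ψ, G n ψ⟫_ℂ = ⟪ψ, G n ψ⟫_ℂ := by
        calc ⟪G n ψ, G n ψ⟫_ℂ = ⟪ψ, G n (G n ψ)⟫_ℂ := hGsym n hn ψ (G n ψ)
          _ = ⟪ψ, G n ψ⟫_ℂ := by rw [hGidem]
      rw [← h3]; exact (hinner_self (G n ψ)).symm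
    rw [h1, h2]; ring
  -- main per-index estimate
  have key : ∀ i < N, a i ≤ ε * Real.sqrt (a i ^ 2 + a (i+1) ^ 2) + c (i+1) := by
    intro i hiN
    have hi : i ≤ N := hiN.le
    have hi1 : i + 1 ≤ N := hiN
    set u := E i ψ with hu
    set g := G (i+1) u with hg
    -- ‖g‖ ≤ ε * a i
    have hgnorm : ‖g‖ ≤ ε * a i := by
      have hGidem : G (i+1) (G (i+1) u) = G (i+1) u := by
        simpa using DFunLike.congr_fun (hGproj (i+1) hi1) u
      have h1 : ⟪g, g⟫_ℂ = ⟪u, G (i+1) u⟫_ℂ := by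
        calc ⟪g, g⟫_ℂ = ⟪u, G (i+1) (G (i+1) u)⟫_ℂ := hGsym (i+1) hi1 u (G (i+1) u)
          _ = ⟪u, G (i+1) u⟫_ℂ := by rw [hGidem]
      have h2 : (⟪g, g⟫_ℂ).re ≤ ε ^ 2 * a i ^ 2 := by
        rw [h1]
        calc (⟪u, G (i+1) u⟫_ℂ).re ≤ ε ^ 2 * (⟪ψ, E i ψ⟫_ℂ).re := hkey i hiN ψ
          _ = ε ^ 2 * a i ^ 2 := by rw [hasq i hi]
      have h3 : ‖g‖ ^ 2 ≤ (ε * a i) ^ 2 := by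
        have h4 := hinner_self g
        nlinarith [h2]
      nlinarith [norm_nonneg g, mul_nonneg hε0 (ha_nonneg i)]
    -- ⟪g, ψ⟫ = ⟪g, E i ψ + E (i+1) ψ⟫
    have hgψ : ⟪g, ψ⟫_ℂ = ⟪g, E i ψ + E (i+1) ψ⟫_ℂ := by
      have h1 : ⟪g, ψ⟫_ℂ = ∑ m ∈ Finset.range (N + 1), ⟪g, E m ψ⟫_ℂ := by
        conv_lhs => rw [show (⟪g, ψ⟫_ℂ = ⟪g, ∑ m ∈ Finset.range (N+1), E m ψ⟫_ℂ) by rw [← hψsum]]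
        exact inner_sum _ _ _
      have hzero : ∀ m ∈ Finset.range (N + 1), m ∉ ({i, i+1} : Finset ℕ) →
          ⟪g, E m ψ⟫_ℂ = 0 := by
        intro m hm hmne
        have hmN : m ≤ N := Nat.lt_succ_iff.mp (Finset.mem_range.mp hm)
        simp only [Finset.mem_insert, Finset.mem_singleton] at hmne
        push_neg at hmne
        have hcond : m + 2 ≤ i + 1 ∨ (i + 1) + 1 ≤ m := by omega
        have hc1 : E m (G (i+1) (E i ψ)) = G (i+1) (E m (E i ψ)) := by
          simpa using DFunLike.congr_fun (hcomm m hmN (i+1) hi1 hcond) (E i ψ)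
        have hEm : E m (E i ψ) = 0 := by
          have := hEorth m hmN i hi
          rw [if_neg hmne.1] at this
          simpa using DFunLike.congr_fun this ψ
        have h2 : E m g = 0 := by rw [hg, hu, hc1, hEm, map_zero]
        calc ⟪g, E m ψ⟫_ℂ = ⟪E m g, ψ⟫_ℂ := (hEsym m hmN g ψ).symm
          _ = 0 := by rw [h2, inner_zero_left]
      have hsub : ({i, i+1} : Finset ℕ) ⊆ Finset.range (N + 1) := by
        intro x hx
        simp only [Finset.mem_insert, Finset.mem_singleton] at hx
        rcases hx with rfl | rfl <;> simp [Finset.mem_range] <;> omega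
      have h3 : ∑ m ∈ ({i, i+1} : Finset ℕ), ⟪g, E m ψ⟫_ℂ
          = ∑ m ∈ Finset.range (N + 1), ⟪g, E m ψ⟫_ℂ :=
        Finset.sum_subset hsub (fun m hm hmn => hzero m hm hmn)
      have h4 : ∑ m ∈ ({i, i+1} : Finset ℕ), ⟪g, E m ψ⟫_ℂ
          = ⟪g, E i ψ⟫_ℂ + ⟪g, E (i+1) ψ⟫_ℂ :=
        Finset.sum_pair (by omega)
      rw [h1, ← h3, h4, ← inner_add_right]
    -- norm of the pair
    have hpairnorm : ‖E i ψ + E (i+1) ψ‖ = Real.sqrt (a i ^ 2 + a (i+1) ^ 2) := by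
      have h1 : ‖E i ψ + E (i+1) ψ‖ ^ 2 = a i ^ 2 + a (i+1) ^ 2 := by
        have hadd := hnorm_add (E i ψ) (E (i+1) ψ)
        have horth' : (⟪E i ψ, E (i+1) ψ⟫_ℂ).re = 0 := by
          rw [horth i hi (i+1) hi1 (by omega)]; simp
        rw [hadd, horth']; ring
      rw [← h1, Real.sqrt_sq (norm_nonneg _)]
    -- assemble
    have hsplit : (⟪u, ψ⟫_ℂ).re = (⟪g, ψ⟫_ℂ).re + (⟪u, ψ - G (i+1) ψ⟫_ℂ).re := by
      have h1 : ⟪u, ψ⟫_ℂ = ⟪u, G (i+1) ψ⟫_ℂ + ⟪u, ψ - G (i+1) ψ⟫_ℂ := by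
        rw [← inner_add_right]
        congr 1
        abel
      have h2 : ⟪g, ψ⟫_ℂ = ⟪u, G (i+1) ψ⟫_ℂ := hGsym (i+1) hi1 u ψ
      rw [h1, h2, Complex.add_re]
    have hterm1 : (⟪g, ψ⟫_ℂ).re ≤ ε * a i * Real.sqrt (a i ^ 2 + a (i+1) ^ 2) := by
      rw [hgψ]
      calc (⟪g, E i ψ + E (i+1) ψ⟫_ℂ).re ≤ ‖g‖ * ‖E i ψ + E (i+1) ψ‖ := hre_le _ _
        _ ≤ (ε * a i) * Real.sqrt (a i ^ 2 + a (i+1) ^ 2) := by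
            rw [hpairnorm]
            exact mul_le_mul_of_nonneg_right hgnorm (Real.sqrt_nonneg _)
    have hterm2 : (⟪u, ψ - G (i+1) ψ⟫_ℂ).re ≤ a i * c (i+1) :=
      hre_le u _
    have huψ : (⟪u, ψ⟫_ℂ).re = a i ^ 2 := by
      have h1 : ⟪u, ψ⟫_ℂ = ⟪ψ, E i ψ⟫_ℂ := hEsym i hi ψ ψ
      rw [h1]
      exact hasq i hi
    have hmain : a i ^ 2 ≤ a i * (ε * Real.sqrt (a i ^ 2 + a (i+1) ^ 2) + c (i+1)) := by
      calc a i ^ 2 = (⟪u, ψ⟫_ℂ).re := huψ.symm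
        _ = (⟪g, ψ⟫_ℂ).re + (⟪u, ψ - G (i+1) ψ⟫_ℂ).re := hsplit
        _ ≤ ε * a i * Real.sqrt (a i ^ 2 + a (i+1) ^ 2) + a i * c (i+1) := by
            linarith [hterm1, hterm2]
        _ = a i * (ε * Real.sqrt (a i ^ 2 + a (i+1) ^ 2) + c (i+1)) := by ring
    rcases eq_or_lt_of_le (ha_nonneg i) with h0 | h0
    · rw [← h0]
      positivity
    · have := mul_le_mul_of_nonneg_left hmain (le_of_lt (inv_pos.mpr h0))
      calc a i = (a i)⁻¹ * (a i ^ 2) := by field_simp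
        _ ≤ (a i)⁻¹ * (a i * (ε * Real.sqrt (a i ^ 2 + a (i+1) ^ 2) + c (i+1))) :=
            mul_le_mul_of_nonneg_left hmain (inv_nonneg.mpr (ha_nonneg i))
        _ = ε * Real.sqrt (a i ^ 2 + a (i+1) ^ 2) + c (i+1) := by field_simp
  -- scalar bookkeeping
  set S : ℝ := ∑ i ∈ Finset.range N, c (i+1) ^ 2 with hS_def
  have hS_nonneg : 0 ≤ S := Finset.sum_nonneg fun i _ => sq_nonneg _
  set B2 : ℝ := ∑ i ∈ Finset.range N, (a i ^ 2 + a (i+1) ^ 2) with hB2_def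
  have hB2_nonneg : 0 ≤ B2 :=
    Finset.sum_nonneg fun i _ => by positivity
  have hB2le : B2 ≤ 2 * ‖ψ‖ ^ 2 := by
    have h1 : ∑ i ∈ Finset.range N, a (i+1) ^ 2 ≤ ‖ψ‖ ^ 2 := by
      rw [hA2, Finset.sum_range_succ']
      have : 0 ≤ a 0 ^ 2 := sq_nonneg _
      linarith
    have h2 : ∑ i ∈ Finset.range N, a i ^ 2 = ‖ψ‖ ^ 2 := hA2'.symm
    rw [hB2_def, Finset.sum_add_distrib, h2]
    linarith
  -- Cauchy-Schwarz for the cross term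
  have hcross : ∑ i ∈ Finset.range N, Real.sqrt (a i ^ 2 + a (i+1) ^ 2) * c (i+1)
      ≤ Real.sqrt B2 * Real.sqrt S := by
    have h1 := Finset.sum_mul_sq_le_sq_mul_sq (Finset.range N)
      (fun i => Real.sqrt (a i ^ 2 + a (i+1) ^ 2)) (fun i => c (i+1))
    have h2 : ∑ i ∈ Finset.range N, Real.sqrt (a i ^ 2 + a (i+1) ^ 2) ^ 2 = B2 := by
      rw [hB2_def]
      exact Finset.sum_congr rfl fun i _ => Real.sq_sqrt (by positivity)
    rw [h2] at h1
    have h3 : 0 ≤ ∑ i ∈ Finset.range N, Real.sqrt (a i ^ 2 + a (i+1) ^ 2) * c (i+1) :=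
      Finset.sum_nonneg fun i _ => mul_nonneg (Real.sqrt_nonneg _) (hc_nonneg _)
    calc ∑ i ∈ Finset.range N, Real.sqrt (a i ^ 2 + a (i+1) ^ 2) * c (i+1)
        = Real.sqrt ((∑ i ∈ Finset.range N, Real.sqrt (a i ^ 2 + a (i+1) ^ 2) * c (i+1)) ^ 2) :=
          (Real.sqrt_sq h3).symm
      _ ≤ Real.sqrt (B2 * S) := Real.sqrt_le_sqrt h1
      _ = Real.sqrt B2 * Real.sqrt S := Real.sqrt_mul hB2_nonneg S
  -- ‖ψ‖ ≤ ε √B2 + √S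
  have hnorm_le : ‖ψ‖ ≤ ε * Real.sqrt B2 + Real.sqrt S := by
    have h1 : ‖ψ‖ ^ 2 ≤ ∑ i ∈ Finset.range N,
        (ε * Real.sqrt (a i ^ 2 + a (i+1) ^ 2) + c (i+1)) ^ 2 := by
      rw [hA2']
      refine Finset.sum_le_sum fun i hi => ?_
      have hiN := Finset.mem_range.mp hi
      have := key i hiN
      exact pow_le_pow_left₀ (ha_nonneg i) this 2
    have h2 : ∑ i ∈ Finset.range N, (ε * Real.sqrt (a i ^ 2 + a (i+1) ^ 2) + c (i+1)) ^ 2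
        = ε ^ 2 * B2 + 2 * ε * (∑ i ∈ Finset.range N, Real.sqrt (a i ^ 2 + a (i+1) ^ 2) * c (i+1)) + S := by
      rw [hS_def, hB2_def, Finset.mul_sum, Finset.mul_sum, ← Finset.sum_add_distrib,
        ← Finset.sum_add_distrib]
      refine Finset.sum_congr rfl fun i _ => ?_
      have hsq : Real.sqrt (a i ^ 2 + a (i+1) ^ 2) ^ 2 = a i ^ 2 + a (i+1) ^ 2 :=
        Real.sq_sqrt (by positivity)
      have hexp : (ε * Real.sqrt (a i ^ 2 + a (i+1) ^ 2) + c (i+1)) ^ 2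
          = ε ^ 2 * Real.sqrt (a i ^ 2 + a (i+1) ^ 2) ^ 2
            + 2 * ε * (Real.sqrt (a i ^ 2 + a (i+1) ^ 2) * c (i+1)) + c (i+1) ^ 2 := by ring
      rw [hexp, hsq]
    have h3 : ‖ψ‖ ^ 2 ≤ (ε * Real.sqrt B2 + Real.sqrt S) ^ 2 := by
      rw [h2] at h1
      have hq : Real.sqrt B2 ^ 2 = B2 := Real.sq_sqrt hB2_nonneg
      have hq2 : Real.sqrt S ^ 2 = S := Real.sq_sqrt hS_nonneg
      nlinarith [hcross, hε0]
    have hrhs_nonneg : 0 ≤ ε * Real.sqrt B2 + Real.sqrt S := by positivity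
    calc ‖ψ‖ = Real.sqrt (‖ψ‖ ^ 2) := (Real.sqrt_sq (norm_nonneg ψ)).symm
      _ ≤ Real.sqrt ((ε * Real.sqrt B2 + Real.sqrt S) ^ 2) := Real.sqrt_le_sqrt h3
      _ = ε * Real.sqrt B2 + Real.sqrt S := Real.sqrt_sq hrhs_nonneg
  have hsqrtB2 : Real.sqrt B2 ≤ Real.sqrt 2 * ‖ψ‖ := by
    calc Real.sqrt B2 ≤ Real.sqrt (2 * ‖ψ‖ ^ 2) := Real.sqrt_le_sqrt hB2le
      _ = Real.sqrt 2 * ‖ψ‖ := by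
          rw [Real.sqrt_mul (by norm_num), Real.sqrt_sq (norm_nonneg _)]
  have hfinal_scalar : (1 - Real.sqrt 2 * ε) ^ 2 * ‖ψ‖ ^ 2 ≤ S := by
    have h1 : ‖ψ‖ ≤ Real.sqrt 2 * ε * ‖ψ‖ + Real.sqrt S := by
      have := mul_le_mul_of_nonneg_left hsqrtB2 hε0
      calc ‖ψ‖ ≤ ε * Real.sqrt B2 + Real.sqrt S := hnorm_le
        _ ≤ ε * (Real.sqrt 2 * ‖ψ‖) + Real.sqrt S := by linarith
        _ = Real.sqrt 2 * ε * ‖ψ‖ + Real.sqrt S := by ring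
    have hpos2 : 0 < 1 - Real.sqrt 2 * ε := by
      have hs2 : (0:ℝ) < Real.sqrt 2 := Real.sqrt_pos.mpr (by norm_num)
      have := hε
      rw [div_eq_mul_inv, one_mul] at this
      have h3 : Real.sqrt 2 * ε < Real.sqrt 2 * (Real.sqrt 2)⁻¹ :=
        mul_lt_mul_of_pos_left this hs2
      rw [mul_inv_cancel₀ (ne_of_gt hs2)] at h3
      linarith
    have h2 : (1 - Real.sqrt 2 * ε) * ‖ψ‖ ≤ Real.sqrt S := by nlinarith
    have hq2 : Real.sqrt S ^ 2 = S := Real.sq_sqrt hS_nonneg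
    nlinarith [norm_nonneg ψ, mul_nonneg (le_of_lt hpos2) (norm_nonneg ψ), Real.sqrt_nonneg S]
  -- final assembly: ⟨ψ, Hψ⟩ ≥ γ S
  have hH : (⟪ψ, (∑ i ∈ Finset.range (N + 1), h i) ψ⟫_ℂ).re
      = ∑ n ∈ Finset.range (N + 1), (⟪ψ, h n ψ⟫_ℂ).re := by
    rw [LinearMap.sum_apply, inner_sum, Complex.re_sum]
  have hterm : ∀ n ∈ Finset.range N, γ * c (n+1) ^ 2 ≤ (⟪ψ, h (n+1) ψ⟫_ℂ).re := by
    intro n hn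
    have hnN : n + 1 ≤ N := Finset.mem_range.mp hn
    have := hgap (n+1) hnN ψ
    rw [hcsq (n+1) hnN]
    exact this
  have hlower : γ * S ≤ (⟪ψ, (∑ i ∈ Finset.range (N + 1), h i) ψ⟫_ℂ).re := by
    rw [hH, Finset.sum_range_succ']
    have h1 : γ * S ≤ ∑ i ∈ Finset.range N, (⟪ψ, h (i+1) ψ⟫_ℂ).re := by
      rw [hS_def, Finset.mul_sum]
      exact Finset.sum_le_sum hterm
    have h2 : 0 ≤ (⟪ψ, h 0 ψ⟫_ℂ).re := hpos 0 (Nat.zero_le N) ψ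
    linarith
  calc γ * (1 - Real.sqrt 2 * ε) ^ 2 * ‖ψ‖ ^ 2 = γ * ((1 - Real.sqrt 2 * ε) ^ 2 * ‖ψ‖ ^ 2) := by ring
    _ ≤ γ * S := mul_le_mul_of_nonneg_left hfinal_scalar (le_of_lt hγ)
    _ ≤ _ := hlower
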